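/- Type-1 error control of the N-SCORE test: Let (r_{0,n}, r_{1,n}) be an i.i.d. sequence of pairs of [0,1]-valued random variables with r_{0,n} independent of r_{1,n}, suppose the null hypothesis E[r_{1,1}] ≤ E[r_{0,1}] holds, and let (ξ_n) be a [0,1]-valued predictable sequence. Define X_0 = 1, X_n = X_{n−1}(1 + ξ_n(r_{1,n} − r_{0,n})), and the test statistic X̄_n = max_{0≤k≤n} X_k. Then for any α ∈ (0,1), P[∃ n : X̄_n ≥ 1/α] ≤ α. -/

import Mathlib

open MeasureTheory ProbabilityTheory

/-- Finite-horizon Ville's inequality for a nonnegative supermartingale started at 1. -/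
lemma nscore_ville_aux {Ω : Type*} {m0 : MeasurableSpace Ω} {μ : Measure Ω}
    [IsProbabilityMeasure μ] {𝒢 : Filtration ℕ m0} {X : ℕ → Ω → ℝ}
    (hX : Supermartingale X 𝒢 μ) (hnonneg : ∀ᵐ ω ∂μ, ∀ n, 0 ≤ X n ω)
    (hX0 : ∀ ω, X 0 ω = 1) {c : ℝ} (hc : 0 < c) (N : ℕ) :
    μ {ω | ∃ k ≤ N, c ≤ X k ω} ≤ ENNReal.ofReal c⁻¹ := by
  set τ : Ω → WithTop ℕ := fun ω => (hittingBtwn X (Set.Ici c) 0 N ω : ℕ) with hτdef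
  have hτ : IsStoppingTime 𝒢 τ := Adapted.isStoppingTime_hittingBtwn hX.stronglyAdapted.adapted measurableSet_Ici
  have hτle : ∀ ω, τ ω ≤ N := fun ω => WithTop.coe_le_coe.mpr (hittingBtwn_le ω)
  have hint : ∀ n, Integrable (X n) μ := hX.integrable
  have hsvint : Integrable (stoppedValue X τ) μ := integrable_stoppedValue ℕ hτ hint hτle
  -- expectation of the stopped value is at most 1
  have hexp : ∫ ω, stoppedValue X τ ω ∂μ ≤ 1 := by
    have h := hX.neg.expected_stoppedValue_mono (isStoppingTime_const 𝒢 0) hτ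
      (fun ω => WithTop.coe_le_coe.mpr (Nat.zero_le _)) hτle
    have h1 : stoppedValue (-X) (fun _ => WithTop.some (0 : ℕ)) = fun ω => -(X 0 ω) := by
      funext ω; simp [stoppedValue]
    have h2 : stoppedValue (-X) τ = fun ω => -(stoppedValue X τ ω) := by
      funext ω; simp [stoppedValue]
    rw [h1, h2, integral_neg, integral_neg, neg_le_neg_iff] at h
    calc ∫ ω, stoppedValue X τ ω ∂μ ≤ ∫ ω, X 0 ω ∂μ := h
      _ = 1 := by simp [hX0]
  set A : Set Ω := {ω | ∃ k ≤ N, c ≤ X k ω} with hAdef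
  have hXmeas : ∀ n, Measurable (X n) :=
    fun n => ((hX.stronglyMeasurable n).mono (𝒢.le n)).measurable
  have hAmeas : MeasurableSet A := by
    have : A = ⋃ k, ⋃ _ : k ≤ N, X k ⁻¹' Set.Ici c := by
      ext ω; simp [hAdef, Set.mem_iUnion]
    rw [this]
    exact MeasurableSet.iUnion fun k => MeasurableSet.iUnion fun _ =>
      (hXmeas k) measurableSet_Ici
  have hge : ∀ ω ∈ A, c ≤ stoppedValue X τ ω := by
    rintro ω ⟨k, hk, hck⟩
    exact stoppedValue_hittingBtwn_mem ⟨k, ⟨Nat.zero_le _, hk⟩, hck⟩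
  have hsv0 : 0 ≤ᵐ[μ] stoppedValue X τ := hnonneg.mono fun ω h => h _
  have hkey : c * (μ A).toReal ≤ 1 := by
    calc c * (μ A).toReal ≤ ∫ ω in A, stoppedValue X τ ω ∂μ :=
          by have := setIntegral_ge_of_const_le hAmeas (measure_ne_top μ A) hge hsvint.integrableOn
             rw [Measure.real, smul_eq_mul, mul_comm] at this; exact this
      _ ≤ ∫ ω, stoppedValue X τ ω ∂μ := setIntegral_le_integral hsvint hsv0
      _ ≤ 1 := hexp
  have htoReal : (μ A).toReal ≤ c⁻¹ := by
    rw [← (le_div_iff₀' hc)] at hkey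
    simpa [one_div] using hkey
  calc μ A = ENNReal.ofReal (μ A).toReal := (ENNReal.ofReal_toReal (measure_ne_top μ A)).symm
    _ ≤ ENNReal.ofReal c⁻¹ := ENNReal.ofReal_le_ofReal htoReal

theorem nscore_type_one_error_control
    {Ω : Type*} {m0 : MeasurableSpace Ω} (μ : Measure Ω) [IsProbabilityMeasure μ]
    (r0 r1 : ℕ → Ω → ℝ)
    (hm0 : ∀ n, Measurable (r0 n)) (hm1 : ∀ n, Measurable (r1 n))
    (hpm : ∀ n, StronglyMeasurable (fun ω => (r0 n ω, r1 n ω)))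
    (hbdd0 : ∀ n, ∀ᵐ ω ∂μ, r0 n ω ∈ Set.Icc (0 : ℝ) 1)
    (hbdd1 : ∀ n, ∀ᵐ ω ∂μ, r1 n ω ∈ Set.Icc (0 : ℝ) 1)
    (hiid : iIndepFun (fun n ω => (r0 n ω, r1 n ω)) μ)
    (hident : ∀ n, IdentDistrib (fun ω => (r0 n ω, r1 n ω)) (fun ω => (r0 0 ω, r1 0 ω)) μ μ)
    (hindep : ∀ n, IndepFun (r0 n) (r1 n) μ)
    -- null hypothesis: policy 1 is not better than policy 0
    (hnull : ∫ ω, r1 0 ω ∂μ ≤ ∫ ω, r0 0 ω ∂μ)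
    (ξ : ℕ → Ω → ℝ)
    (hξbdd : ∀ n ω, ξ n ω ∈ Set.Icc (0 : ℝ) 1)
    (hξ0 : StronglyMeasurable[⊥] (ξ 0))
    (hξpred : ∀ n, StronglyMeasurable[(Filtration.natural (fun n ω => (r0 n ω, r1 n ω)) hpm) n]
      (ξ (n + 1)))
    (X : ℕ → Ω → ℝ)
    (hX0 : ∀ ω, X 0 ω = 1)
    (hXrec : ∀ n ω, X (n + 1) ω = X n ω * (1 + ξ n ω * (r1 n ω - r0 n ω)))
    (α : ℝ) (hα : α ∈ Set.Ioo (0 : ℝ) 1) :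
    μ {ω | ∃ n, 1 / α ≤ (Finset.range (n + 1)).sup' (by simp) fun k => X k ω}
      ≤ ENNReal.ofReal α := by
  obtain ⟨hα0, hα1⟩ := hα
  set ℱ := Filtration.natural (fun n ω => (r0 n ω, r1 n ω)) hpm with hℱdef
  -- shifted filtration
  set 𝒢 : Filtration ℕ m0 :=
    { seq := fun n => Nat.rec ⊥ (fun k _ => ℱ k) n
      mono' := monotone_nat_of_le_succ (by
        rintro (_ | n)
        · exact bot_le
        · exact ℱ.mono (Nat.le_succ n))
      le' := by rintro (_ | n); exacts [bot_le, ℱ.le n] } with h𝒢def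
  have h𝒢0 : (𝒢 0 : MeasurableSpace Ω) = ⊥ := rfl
  have h𝒢succ : ∀ n, (𝒢 (n + 1) : MeasurableSpace Ω) = ℱ n := fun n => rfl
  -- ξ is predictable w.r.t. 𝒢
  have hξG : ∀ n, StronglyMeasurable[𝒢 n] (ξ n) := by
    rintro (_ | n)
    · exact hξ0
    · exact hξpred n
  have hpair : ∀ n, StronglyMeasurable[ℱ n] fun ω => (r0 n ω, r1 n ω) :=
    Filtration.stronglyAdapted_natural hpm
  have hr0G : ∀ n, StronglyMeasurable[𝒢 (n + 1)] (r0 n) := fun n =>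
    (measurable_fst.comp (hpair n).measurable).stronglyMeasurable
  have hr1G : ∀ n, StronglyMeasurable[𝒢 (n + 1)] (r1 n) := fun n =>
    (measurable_snd.comp (hpair n).measurable).stronglyMeasurable
  -- X is adapted to 𝒢
  have hXmG : ∀ n, StronglyMeasurable[𝒢 n] (X n) := by
    intro n
    induction n with
    | zero =>
      have : X 0 = fun _ => (1 : ℝ) := funext hX0
      rw [this]; exact stronglyMeasurable_const
    | succ k ih =>
      have : X (k + 1) = fun ω => X k ω * (1 + ξ k ω * (r1 k ω - r0 k ω)) :=
        funext fun ω => hXrec k ω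
      rw [this]
      exact (ih.mono (𝒢.mono (Nat.le_succ k))).mul
        (stronglyMeasurable_const.add
          (((hξG k).mono (𝒢.mono (Nat.le_succ k))).mul ((hr1G k).sub (hr0G k))))
  have hXm : ∀ n, Measurable (X n) := fun n => ((hXmG n).mono (𝒢.le n)).measurable
  -- a.e. bounds on X
  have hb : ∀ᵐ ω ∂μ, ∀ n, 0 ≤ X n ω ∧ X n ω ≤ 2 ^ n := by
    filter_upwards [ae_all_iff.2 hbdd0, ae_all_iff.2 hbdd1] with ω h0 h1
    intro n
    induction n with
    | zero => simp [hX0 ω]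
    | succ k ih =>
      obtain ⟨hξ0', hξ1'⟩ := hξbdd k ω
      obtain ⟨h00, h01⟩ := h0 k
      obtain ⟨h10, h11⟩ := h1 k
      have hfac0 : 0 ≤ 1 + ξ k ω * (r1 k ω - r0 k ω) := by nlinarith
      have hfac2 : 1 + ξ k ω * (r1 k ω - r0 k ω) ≤ 2 := by nlinarith
      constructor
      · rw [hXrec]; exact mul_nonneg ih.1 hfac0
      · rw [hXrec, pow_succ]
        exact mul_le_mul ih.2 hfac2 hfac0 (by positivity)
  -- integrability
  have hXint : ∀ n, Integrable (X n) μ := by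
    intro n
    refine (integrable_const ((2 : ℝ) ^ n)).mono' (hXm n).aestronglyMeasurable ?_
    filter_upwards [hb] with ω h
    rw [Real.norm_eq_abs, abs_of_nonneg (h n).1]
    exact (h n).2
  set D : ℕ → Ω → ℝ := fun n ω => r1 n ω - r0 n ω with hDdef
  have hDm : ∀ n, Measurable (D n) := fun n => (hm1 n).sub (hm0 n)
  have hDbdd : ∀ n, ∀ᵐ ω ∂μ, ‖D n ω‖ ≤ 1 := by
    intro n
    filter_upwards [hbdd0 n, hbdd1 n] with ω h0 h1
    simp only [hDdef]
    rw [Real.norm_eq_abs, abs_le]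
    obtain ⟨h00, h01⟩ := h0
    obtain ⟨h10, h11⟩ := h1
    constructor <;> linarith
  have hDint : ∀ n, Integrable (D n) μ := fun n =>
    (integrable_const (1 : ℝ)).mono' (hDm n).aestronglyMeasurable (hDbdd n)
  set g : ℕ → Ω → ℝ := fun n ω => X n ω * ξ n ω with hgdef
  have hgmG : ∀ n, StronglyMeasurable[𝒢 n] (g n) := fun n => (hXmG n).mul (hξG n)
  have hgDint : ∀ n, Integrable (g n * D n) μ := by
    intro n
    refine (integrable_const ((2 : ℝ) ^ n)).mono'
      ((((hXm n).mul (((hξG n).mono (𝒢.le n)).measurable)).mul (hDm n)).aestronglyMeasurable) ?_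
    filter_upwards [hb, hDbdd n] with ω h hD
    obtain ⟨hξ0', hξ1'⟩ := hξbdd n ω
    obtain ⟨hx0, hx1⟩ := h n
    rw [Real.norm_eq_abs] at hD ⊢
    simp only [Pi.mul_apply, hgdef]
    rw [abs_mul, abs_mul, abs_of_nonneg hx0, abs_of_nonneg hξ0']
    calc X n ω * ξ n ω * |D n ω| ≤ 2 ^ n * 1 * 1 := by
          apply mul_le_mul _ hD (abs_nonneg _) (by positivity)
          exact mul_le_mul hx1 hξ1' hξ0' (by positivity)
      _ = 2 ^ n := by ring
  -- mean of D n is nonpositive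
  have hDmean : ∀ n, ∫ ω, D n ω ∂μ ≤ 0 := by
    intro n
    have e1 : ∫ ω, r1 n ω ∂μ = ∫ ω, r1 0 ω ∂μ := by
      have := ((hident n).comp measurable_snd).integral_eq
      simpa [Function.comp] using this
    have e0 : ∫ ω, r0 n ω ∂μ = ∫ ω, r0 0 ω ∂μ := by
      have := ((hident n).comp measurable_fst).integral_eq
      simpa [Function.comp] using this
    have : ∫ ω, D n ω ∂μ = ∫ ω, r1 n ω ∂μ - ∫ ω, r0 n ω ∂μ := by
      simp only [hDdef]
      exact integral_sub ((integrable_const (1:ℝ)).mono' (hm1 n).aestronglyMeasurable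
        (by filter_upwards [hbdd1 n] with ω h; rw [Real.norm_eq_abs, abs_le]; constructor <;> linarith [h.1, h.2]))
        ((integrable_const (1:ℝ)).mono' (hm0 n).aestronglyMeasurable
        (by filter_upwards [hbdd0 n] with ω h; rw [Real.norm_eq_abs, abs_le]; constructor <;> linarith [h.1, h.2]))
    rw [this, e1, e0]
    linarith
  -- conditional expectation of D n given 𝒢 n is its mean
  have hDcond : ∀ n, μ[D n| 𝒢 n] =ᵐ[μ] fun _ => ∫ ω, D n ω ∂μ := by
    rintro (_ | n)
    · rw [show (𝒢 0 : MeasurableSpace Ω) = ⊥ from rfl, condExp_bot]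
    · rw [show (𝒢 (n + 1) : MeasurableSpace Ω) = ℱ n from rfl]
      refine condExp_indep_eq (hpm (n + 1)).measurable.comap_le (ℱ.le n) ?_ ?_
      · exact ((measurable_snd.comp (comap_measurable _)).sub
          (measurable_fst.comp (comap_measurable _))).stronglyMeasurable
      · exact hiid.indep_comap_natural_of_lt hpm (Nat.lt_succ_self n)
  -- supermartingale property
  have hstep : ∀ n, μ[X (n + 1)| 𝒢 n] ≤ᵐ[μ] X n := by
    intro n
    have hXeq : X (n + 1) = X n + g n * D n := by
      funext ω
      simp only [Pi.add_apply, Pi.mul_apply, hgdef, hDdef]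
      rw [hXrec]; ring
    have h1 : μ[X (n + 1)| 𝒢 n] =ᵐ[μ] μ[X n| 𝒢 n] + μ[g n * D n| 𝒢 n] := by
      rw [hXeq]; exact condExp_add (hXint n) (hgDint n) _
    have h2 : μ[X n| 𝒢 n] = X n :=
      condExp_of_stronglyMeasurable (𝒢.le n) (hXmG n) (hXint n)
    have h3 : μ[g n * D n| 𝒢 n] =ᵐ[μ] g n * μ[D n| 𝒢 n] :=
      condExp_mul_of_stronglyMeasurable_left (hgmG n) (hgDint n) (hDint n)
    filter_upwards [h1, h3, (hDcond n), hb] with ω e1 e3 e4 hbω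
    rw [e1]
    simp only [Pi.add_apply, h2]
    rw [e3]
    simp only [Pi.mul_apply, e4]
    have hg0 : 0 ≤ g n ω := mul_nonneg (hbω n).1 (hξbdd n ω).1
    nlinarith [mul_nonpos_of_nonneg_of_nonpos hg0 (hDmean n)]
  have hsuper : Supermartingale X 𝒢 μ :=
    supermartingale_nat (fun n => hXmG n) hXint hstep
  -- rewrite the rejection set as an increasing union
  have hset : {ω | ∃ n, 1 / α ≤ (Finset.range (n + 1)).sup' (by simp) fun k => X k ω}
      = ⋃ N, {ω | ∃ k ≤ N, 1 / α ≤ X k ω} := by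
    ext ω
    simp only [Set.mem_setOf_eq, Set.mem_iUnion]
    constructor
    · rintro ⟨n, hn⟩
      obtain ⟨k, hk, hck⟩ := Finset.exists_mem_eq_sup' (by simp : (Finset.range (n+1)).Nonempty)
        fun k => X k ω
      exact ⟨n, k, Nat.lt_succ_iff.mp (Finset.mem_range.mp hk), hck ▸ hn⟩
    · rintro ⟨N, k, hkN, hck⟩
      exact ⟨N, Finset.le_sup'_of_le _ (Finset.mem_range.mpr (Nat.lt_succ_of_le hkN)) hck⟩
  have hmono : Monotone fun N => {ω | ∃ k ≤ N, 1 / α ≤ X k ω} := by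
    intro a b hab ω
    rintro ⟨k, hk, hck⟩
    exact ⟨k, hk.trans hab, hck⟩
  rw [hset, hmono.measure_iUnion]
  refine iSup_le fun N => ?_
  have hc : (0 : ℝ) < 1 / α := by positivity
  have := nscore_ville_aux hsuper (hb.mono fun ω h n => (h n).1) hX0 hc N
  simpa [one_div] using this
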